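/- arXiv:math/0612433 — 3 statements merged into one kernel-verified Lean document; each statement's English description precedes it below -/
import Mathlib

section
/- Let 0 < p < ∞, t > 0, s > 0, and suppose there exists C ≥ 0 such that for every f ∈ L^p(ℂⁿ, dv_s) the function w ↦ e^{t⟨z,w⟩} f(w) is dv_t-integrable for a.e. z ∈ ℂⁿ and ∫_{ℂⁿ} |S_t f|^p dv_s ≤ C^p ∫_{ℂⁿ} |f|^p dv_s, where S_t f(z) = ∫_{ℂⁿ} e^{t⟨z,w⟩} f(w) dv_t(w). Then p·t ≤ 2s. -/
open MeasureTheory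

/-- `|z|² = |z₁|² + ⋯ + |zₙ|²` on `ℂⁿ`. -/
noncomputable def nsq {n : ℕ} (z : Fin n → ℂ) : ℝ := ∑ i, Complex.normSq (z i)

/-- `⟨z,w⟩ = z₁·conj w₁ + ⋯ + zₙ·conj wₙ` on `ℂⁿ`. -/
noncomputable def herm {n : ℕ} (z w : Fin n → ℂ) : ℂ := ∑ i, z i * (starRingEnd ℂ) (w i)

/-- The Gaussian probability measure `dv_t(z) = (t/π)^n e^{-t|z|²} dv(z)` on `ℂⁿ`. -/
noncomputable def gaussMeasure (n : ℕ) (t : ℝ) : Measure (Fin n → ℂ) :=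
  volume.withDensity fun z => ENNReal.ofReal ((t / Real.pi) ^ n * Real.exp (-t * nsq z))

/-- Boundedness of the operator `S_t f(z) = ∫ e^{t⟨z,w⟩} f(w) dv_t(w)` on `L^p(ℂⁿ, dv_s)`
with constant `C`: for every `f ∈ L^p(dv_s)` the integrand is `dv_t`-integrable for a.e. `z`
and `∫ |S_t f|^p dv_s ≤ C^p ∫ |f|^p dv_s`. -/
def SBounded (n : ℕ) (t s p C : ℝ) : Prop :=
  ∀ f : (Fin n → ℂ) → ℂ, MemLp f (ENNReal.ofReal p) (gaussMeasure n s) →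
    (∀ᵐ z ∂(volume : Measure (Fin n → ℂ)),
      Integrable (fun w => Complex.exp ((t : ℂ) * herm z w) * f w) (gaussMeasure n t)) ∧
    ∫⁻ z, ENNReal.ofReal
        (‖∫ w, Complex.exp ((t : ℂ) * herm z w) * f w ∂(gaussMeasure n t)‖ ^ p)
      ∂(gaussMeasure n s)
      ≤ ENNReal.ofReal (C ^ p) *
        ∫⁻ z, ENNReal.ofReal (‖f z‖ ^ p) ∂(gaussMeasure n s)

lemma gauss1d {γ : ℝ} (hγ : 0 < γ) (c : ℂ) :
    ∫ x : ℝ, Complex.exp (-(γ:ℂ) * x^2 + c * x + 0)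
      = ((Real.pi : ℂ)/(γ:ℂ)) ^ (1/2 : ℂ) * Complex.exp (c^2/(4*γ)) := by
  have h : (-(γ:ℂ)).re < 0 := by simpa using hγ
  rw [integral_cexp_quadratic h c 0, neg_neg]
  congr 1
  rw [mul_neg, div_neg, zero_sub, neg_neg]

lemma gauss1d_integrable {γ : ℝ} (hγ : 0 < γ) (c : ℂ) :
    Integrable (fun x : ℝ => Complex.exp (-(γ:ℂ) * x^2 + c * x + 0)) := by
  have h : (-(γ:ℂ)).re < 0 := by simpa using hγ
  exact integrable_cexp_quadratic' h c 0

lemma cexpo {γ : ℝ} (a b : ℂ) (w : ℂ) :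
    a * w + b * (starRingEnd ℂ) w - (γ:ℂ) * (Complex.normSq w : ℂ)
      = (-(γ:ℂ) * (w.re:ℂ)^2 + (a+b) * w.re + 0) + (-(γ:ℂ) * (w.im:ℂ)^2 + ((a-b)*Complex.I) * w.im + 0) := by
  apply Complex.ext <;>
    simp [Complex.normSq_apply, Complex.mul_re, Complex.mul_im, Complex.add_re, Complex.add_im,
      Complex.sub_re, Complex.sub_im, Complex.ofReal_re, Complex.ofReal_im, ← Complex.ofReal_pow] <;> ring

lemma hsplit {γ : ℝ} (a b : ℂ) (q : ℝ × ℝ) :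
    ((fun w : ℂ => Complex.exp (a * w + b * (starRingEnd ℂ) w - (γ:ℂ) * (Complex.normSq w : ℂ))) ∘
        ⇑Complex.measurableEquivRealProd.symm) q
      = Complex.exp (-(γ:ℂ) * (q.1:ℂ)^2 + (a+b) * q.1 + 0) *
        Complex.exp (-(γ:ℂ) * (q.2:ℂ)^2 + ((a-b)*Complex.I) * q.2 + 0) := by
  show Complex.exp _ = _
  rw [cexpo a b, Complex.exp_add]
  rfl

lemma cGauss_integral {γ : ℝ} (hγ : 0 < γ) (a b : ℂ) :
    ∫ w : ℂ, Complex.exp (a * w + b * (starRingEnd ℂ) w - (γ:ℂ) * (Complex.normSq w : ℂ))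
      = ((Real.pi / γ : ℝ) : ℂ) * Complex.exp (a * b / γ) := by
  rw [← (Complex.volume_preserving_equiv_real_prod.symm).integral_comp
      Complex.measurableEquivRealProd.symm.measurableEmbedding
      (fun w => Complex.exp (a * w + b * (starRingEnd ℂ) w - (γ:ℂ) * (Complex.normSq w : ℂ)))]
  rw [show (fun q : ℝ × ℝ => (fun w : ℂ => Complex.exp (a * w + b * (starRingEnd ℂ) w - (γ:ℂ) * (Complex.normSq w : ℂ))) (Complex.measurableEquivRealProd.symm q)) = _ from funext (hsplit a b)]
  rw [Measure.volume_eq_prod,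
    integral_prod_mul (fun u : ℝ => Complex.exp (-(γ:ℂ) * (u:ℂ)^2 + (a+b) * u + 0))
      (fun u : ℝ => Complex.exp (-(γ:ℂ) * (u:ℂ)^2 + ((a-b)*Complex.I) * u + 0)),
    gauss1d hγ (a+b), gauss1d hγ ((a-b)*Complex.I)]
  have h0 : ((Real.pi : ℂ)/(γ:ℂ)) ≠ 0 := by
    apply div_ne_zero
    · simpa using Real.pi_ne_zero
    · simpa using hγ.ne'
  rw [mul_mul_mul_comm, ← Complex.exp_add]
  have hγ' : (γ:ℂ) ≠ 0 := by simpa using hγ.ne'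
  congr 1
  · rw [← Complex.cpow_add _ _ h0]
    norm_num
  · congr 1
    have hI : ((a-b)*Complex.I)^2 = -((a-b)^2) := by rw [mul_pow, Complex.I_sq]; ring
    rw [hI]
    field_simp
    ring

lemma cGauss_integrable {γ : ℝ} (hγ : 0 < γ) (a b : ℂ) :
    Integrable (fun w : ℂ => Complex.exp (a * w + b * (starRingEnd ℂ) w - (γ:ℂ) * (Complex.normSq w : ℂ))) := by
  rw [← (Complex.volume_preserving_equiv_real_prod.symm).integrable_comp_emb
      Complex.measurableEquivRealProd.symm.measurableEmbedding]
  rw [show ((fun w : ℂ => Complex.exp (a * w + b * (starRingEnd ℂ) w - (γ:ℂ) * (Complex.normSq w : ℂ))) ∘ ⇑Complex.measurableEquivRealProd.symm) = _ from funext (hsplit a b)]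
  rw [Measure.volume_eq_prod]
  exact (gauss1d_integrable hγ (a+b)).mul_prod (gauss1d_integrable hγ ((a-b)*Complex.I))

noncomputable def dg (τ : ℝ) (w : ℂ) : ℝ := τ / Real.pi * Real.exp (-(τ * Complex.normSq w))

lemma rGauss_eq {γ : ℝ} (v : ℝ) (w : ℂ) :
    ((Real.exp (v * w.re - γ * Complex.normSq w) : ℝ) : ℂ)
      = Complex.exp (((v:ℂ)/2) * w + ((v:ℂ)/2) * (starRingEnd ℂ) w - (γ:ℂ) * (Complex.normSq w : ℂ)) := by
  rw [Complex.ofReal_exp]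
  congr 1
  have h := Complex.add_conj w
  push_cast at h ⊢
  linear_combination (-(v:ℂ)/2) * h

lemma rGauss_integrable {γ : ℝ} (hγ : 0 < γ) (v : ℝ) :
    Integrable (fun w : ℂ => Real.exp (v * w.re - γ * Complex.normSq w)) := by
  have h := (cGauss_integrable hγ ((v:ℂ)/2) ((v:ℂ)/2)).re
  simp only [← rGauss_eq, RCLike.re_to_complex, Complex.ofReal_re] at h
  exact h

lemma rGauss_integral {γ : ℝ} (hγ : 0 < γ) (v : ℝ) :
    ∫ w : ℂ, Real.exp (v * w.re - γ * Complex.normSq w) = Real.pi / γ * Real.exp (v^2/(4*γ)) := by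
  have hc : (∫ w : ℂ, ((Real.exp (v * w.re - γ * Complex.normSq w) : ℝ) : ℂ))
      = ((Real.pi / γ * Real.exp (v^2/(4*γ)) : ℝ) : ℂ) := by
    simp_rw [rGauss_eq]
    rw [cGauss_integral hγ ((v:ℂ)/2) ((v:ℂ)/2), Complex.ofReal_mul, Complex.ofReal_exp]
    congr 2
    push_cast
    ring
  have h3 : (∫ w : ℂ, ((Real.exp (v * w.re - γ * Complex.normSq w) : ℝ) : ℂ))
      = ((∫ w : ℂ, Real.exp (v * w.re - γ * Complex.normSq w) : ℝ) : ℂ) := integral_ofReal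
  rw [h3] at hc
  exact_mod_cast hc

lemma coord_eq {τ u : ℝ} (v : ℝ) (w : ℂ) :
    Real.exp (u * Complex.normSq w + v * w.re) * dg τ w
      = τ / Real.pi * Real.exp (v * w.re - (τ - u) * Complex.normSq w) := by
  unfold dg
  rw [← mul_assoc, mul_comm (Real.exp _) (τ / Real.pi), mul_assoc, ← Real.exp_add]
  congr 2
  ring

lemma coord_integrable {τ u : ℝ} (hu : u < τ) (v : ℝ) :
    Integrable (fun w : ℂ => Real.exp (u * Complex.normSq w + v * w.re) * dg τ w) := by
  simp_rw [coord_eq]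
  exact (rGauss_integrable (by linarith) v).const_mul _

lemma coord_integral {τ u : ℝ} (hτ : 0 < τ) (hu : u < τ) (v : ℝ) :
    ∫ w : ℂ, Real.exp (u * Complex.normSq w + v * w.re) * dg τ w
      = τ / (τ - u) * Real.exp (v^2 / (4 * (τ - u))) := by
  simp_rw [coord_eq]
  rw [integral_const_mul, rGauss_integral (by linarith : (0:ℝ) < τ - u)]
  rw [← mul_assoc]
  congr 1
  have h1 : Real.pi ≠ 0 := Real.pi_ne_zero
  have h2 : τ - u ≠ 0 := by linarith
  field_simp

lemma dg_integral {τ : ℝ} (hτ : 0 < τ) : ∫ w : ℂ, dg τ w = 1 := by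
  have h := coord_integral hτ (show (0:ℝ) < τ by linarith) 0
  simp only [zero_mul, add_zero, Real.exp_zero, one_mul, sub_zero] at h
  rw [h]
  simp [ne_of_gt hτ]

lemma dg_integrable {τ : ℝ} (hτ : 0 < τ) : Integrable (dg τ) := by
  have h := coord_integrable (show (0:ℝ) < τ by linarith) (v := 0) (u := 0)
  simp only [zero_mul, add_zero, Real.exp_zero, one_mul] at h
  exact h

lemma cont_nsq {n : ℕ} : Continuous (nsq (n := n)) := by
  unfold nsq
  exact continuous_finset_sum _ fun i _ => Complex.continuous_normSq.comp (continuous_apply i)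

lemma density_prod {n : ℕ} (τ : ℝ) (z : Fin n → ℂ) :
    (τ / Real.pi) ^ n * Real.exp (-τ * nsq z) = ∏ i, dg τ (z i) := by
  unfold nsq dg
  rw [Finset.prod_mul_distrib, Finset.prod_const, Finset.card_univ, Fintype.card_fin,
    ← Real.exp_sum]
  congr 2
  rw [Finset.mul_sum]
  exact Finset.sum_congr rfl fun i _ => by ring

lemma master_pointwise {n : ℕ} [NeZero n] (τ u v : ℝ) (z : Fin n → ℂ) :
    Real.exp (u * Complex.normSq (z 0) + v * (z 0).re) * ((τ / Real.pi) ^ n * Real.exp (-τ * nsq z))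
      = ∏ i, ((if i = (0 : Fin n) then Real.exp (u * Complex.normSq (z i) + v * (z i).re) else 1)
          * dg τ (z i)) := by
  rw [density_prod, Finset.prod_mul_distrib]
  congr 1
  rw [Finset.prod_ite_eq' Finset.univ (0 : Fin n)
    (fun i => Real.exp (u * Complex.normSq (z i) + v * (z i).re))]
  simp

lemma master_integrable {n : ℕ} [NeZero n] {τ u : ℝ} (hτ : 0 < τ) (hu : u < τ) (v : ℝ) :
    Integrable (fun z : Fin n → ℂ =>
      Real.exp (u * Complex.normSq (z 0) + v * (z 0).re)
        * ((τ / Real.pi) ^ n * Real.exp (-τ * nsq z))) := by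
  simp_rw [master_pointwise τ u v]
  refine Integrable.fintype_prod
    (f := fun (i : Fin n) (w : ℂ) =>
      (if i = (0 : Fin n) then Real.exp (u * Complex.normSq w + v * w.re) else 1) * dg τ w) ?_
  intro i
  by_cases hi : i = 0
  · subst hi
    simp only [if_pos rfl]
    exact coord_integrable hu v
  · simp only [if_neg hi, one_mul]
    exact dg_integrable hτ

lemma master_integral {n : ℕ} [NeZero n] {τ u : ℝ} (hτ : 0 < τ) (hu : u < τ) (v : ℝ) :
    ∫ z : Fin n → ℂ,
      Real.exp (u * Complex.normSq (z 0) + v * (z 0).re)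
        * ((τ / Real.pi) ^ n * Real.exp (-τ * nsq z))
      = τ / (τ - u) * Real.exp (v^2 / (4 * (τ - u))) := by
  simp_rw [master_pointwise τ u v]
  rw [integral_fintype_prod_volume_eq_prod
    (f := fun (i : Fin n) (w : ℂ) =>
      (if i = (0 : Fin n) then Real.exp (u * Complex.normSq w + v * w.re) else 1) * dg τ w)]
  have hval : ∀ i : Fin n,
      (∫ w : ℂ, (if i = (0 : Fin n) then Real.exp (u * Complex.normSq w + v * w.re) else 1)
        * dg τ w)
      = if i = (0 : Fin n) then τ / (τ - u) * Real.exp (v^2 / (4 * (τ - u))) else 1 := by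
    intro i
    by_cases hi : i = 0
    · subst hi
      simp only [if_pos rfl]
      exact coord_integral hτ hu v
    · simp only [if_neg hi, one_mul]
      exact dg_integral hτ
  simp_rw [hval]
  rw [Finset.prod_ite_eq' Finset.univ (0 : Fin n)]
  simp

lemma lint_master {n : ℕ} [NeZero n] {τ u : ℝ} (hτ : 0 < τ) (hu : u < τ) (v K : ℝ) (hK : 0 ≤ K) :
    ∫⁻ z, ENNReal.ofReal (K * Real.exp (u * Complex.normSq (z 0) + v * (z 0).re))
        ∂(gaussMeasure n τ)
      = ENNReal.ofReal (K * (τ / (τ - u) * Real.exp (v^2 / (4 * (τ - u))))) := by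
  have hc1 : Continuous fun z : Fin n → ℂ => (τ / Real.pi) ^ n * Real.exp (-τ * nsq z) :=
    continuous_const.mul (Real.continuous_exp.comp (continuous_const.mul cont_nsq))
  have hc2 : Continuous fun z : Fin n → ℂ =>
      K * Real.exp (u * Complex.normSq (z 0) + v * (z 0).re) :=
    continuous_const.mul (Real.continuous_exp.comp
      ((continuous_const.mul (Complex.continuous_normSq.comp (continuous_apply 0))).add
        (continuous_const.mul (Complex.continuous_re.comp (continuous_apply 0)))))
  have hm1 : Measurable fun z : Fin n → ℂ =>
      ENNReal.ofReal ((τ / Real.pi) ^ n * Real.exp (-τ * nsq z)) :=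
    ENNReal.measurable_ofReal.comp hc1.measurable
  have hm2 : Measurable fun z : Fin n → ℂ =>
      ENNReal.ofReal (K * Real.exp (u * Complex.normSq (z 0) + v * (z 0).re)) :=
    ENNReal.measurable_ofReal.comp hc2.measurable
  unfold gaussMeasure
  rw [lintegral_withDensity_eq_lintegral_mul _ hm1 hm2]
  have heq : (fun z : Fin n → ℂ =>
        ((fun z : Fin n → ℂ => ENNReal.ofReal ((τ / Real.pi) ^ n * Real.exp (-τ * nsq z))) *
          fun z : Fin n → ℂ =>
            ENNReal.ofReal (K * Real.exp (u * Complex.normSq (z 0) + v * (z 0).re))) z)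
      = fun z : Fin n → ℂ => ENNReal.ofReal (K * (Real.exp (u * Complex.normSq (z 0) + v * (z 0).re)
          * ((τ / Real.pi) ^ n * Real.exp (-τ * nsq z)))) := by
    funext z
    simp only [Pi.mul_apply]
    rw [← ENNReal.ofReal_mul (by
      exact mul_nonneg (pow_nonneg (div_nonneg hτ.le Real.pi_pos.le) n) (Real.exp_pos _).le)]
    congr 1
    ring
  rw [heq]
  rw [← ofReal_integral_eq_lintegral_ofReal ((master_integrable hτ hu v).const_mul K)
    (Filter.Eventually.of_forall fun z => mul_nonneg hK (mul_nonneg (Real.exp_pos _).le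
      (mul_nonneg (pow_nonneg (div_nonneg hτ.le Real.pi_pos.le) n) (Real.exp_pos _).le)))]
  rw [integral_const_mul, master_integral hτ hu v]

lemma exp_rpow (x p : ℝ) : (Real.exp x) ^ p = Real.exp (p * x) := by
  rw [Real.rpow_def_of_pos (Real.exp_pos x), Real.log_exp, mul_comm]

lemma abs_f (θ β : ℝ) (c : ℂ) :
    ‖Complex.exp ((θ:ℂ) * (Complex.normSq c : ℂ) + (β:ℂ) * c)‖
      = Real.exp (θ * Complex.normSq c + β * c.re) := by
  rw [Complex.norm_exp]
  congr 1
  simp [Complex.add_re, Complex.mul_re]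

lemma ofnnorm (c : ℂ) {p : ℝ} (hp : 0 ≤ p) :
    ((‖c‖₊ : ENNReal)) ^ p = ENNReal.ofReal (‖c‖ ^ p) := by
  rw [← ENNReal.ofReal_rpow_of_nonneg (norm_nonneg c) hp, ← coe_nnnorm, ENNReal.ofReal_coe_nnreal]

noncomputable def testf {n : ℕ} [NeZero n] (θ β : ℝ) : (Fin n → ℂ) → ℂ :=
  fun z => Complex.exp ((θ:ℂ) * (Complex.normSq (z 0) : ℂ) + (β:ℂ) * z 0)

lemma abs_f_rpow (p θ β : ℝ) (c : ℂ) :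
    ‖Complex.exp ((θ:ℂ) * (Complex.normSq c : ℂ) + (β:ℂ) * c)‖ ^ p
      = Real.exp ((p*θ) * Complex.normSq c + (p*β) * c.re) := by
  rw [abs_f, exp_rpow]
  congr 1
  ring

lemma lint_f {n : ℕ} [NeZero n] {s p θ : ℝ} (hs : 0 < s) (hθ : p * θ < s) (β : ℝ) :
    ∫⁻ z, ENNReal.ofReal (‖testf (n := n) θ β z‖ ^ p) ∂(gaussMeasure n s)
      = ENNReal.ofReal (s / (s - p*θ) * Real.exp ((p*β)^2 / (4 * (s - p*θ)))) := by
  have hpt : ∀ z : Fin n → ℂ, ENNReal.ofReal (‖testf (n := n) θ β z‖ ^ p)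
      = ENNReal.ofReal (1 * Real.exp ((p*θ) * Complex.normSq (z 0) + (p*β) * (z 0).re)) := by
    intro z
    rw [one_mul]
    unfold testf
    rw [abs_f_rpow]
  simp_rw [hpt]
  rw [lint_master hs hθ (p*β) 1 zero_le_one, one_mul]

lemma cont_testf {n : ℕ} [NeZero n] (θ β : ℝ) : Continuous (testf (n := n) θ β) := by
  unfold testf
  exact Complex.continuous_exp.comp
    ((continuous_const.mul (Complex.continuous_ofReal.comp
      (Complex.continuous_normSq.comp (continuous_apply 0)))).add
      (continuous_const.mul (continuous_apply 0)))

lemma testf_mem {n : ℕ} [NeZero n] {s p θ : ℝ} (hp : 0 < p) (hs : 0 < s) (hθ : p * θ < s)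
    (β : ℝ) : MemLp (testf (n := n) θ β) (ENNReal.ofReal p) (gaussMeasure n s) := by
  constructor
  · exact (cont_testf θ β).aestronglyMeasurable
  · rw [eLpNorm_eq_lintegral_rpow_enorm_toReal (by simpa using (ENNReal.ofReal_pos.mpr hp).ne')
      ENNReal.ofReal_ne_top]
    apply ENNReal.rpow_lt_top_of_nonneg (by positivity)
    rw [ENNReal.toReal_ofReal hp.le]
    have hpt : ∀ z : Fin n → ℂ, ‖testf (n := n) θ β z‖ₑ ^ p
        = ENNReal.ofReal (‖testf (n := n) θ β z‖ ^ p) := fun z => ofnnorm _ hp.le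
    simp_rw [hpt]
    rw [lint_f hs hθ β]
    exact ENNReal.ofReal_ne_top

lemma sum_base {n : ℕ} (t : ℝ) (z w : Fin n → ℂ) :
    (∑ i, ((t:ℂ) * z i * (starRingEnd ℂ) (w i) - (t:ℂ) * (Complex.normSq (w i) : ℂ)))
      = (t:ℂ) * herm z w - (t:ℂ) * ((nsq w : ℝ) : ℂ) := by
  rw [Finset.sum_sub_distrib]
  congr 1
  · unfold herm
    rw [Finset.mul_sum]
    exact Finset.sum_congr rfl fun i _ => by ring
  · unfold nsq
    push_cast
    rw [Finset.mul_sum]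

noncomputable def psi {n : ℕ} [NeZero n] (t θ β : ℝ) (z : Fin n → ℂ) (i : Fin n) (u : ℂ) : ℂ :=
  ((t / Real.pi : ℝ) : ℂ) *
    Complex.exp ((if i = (0 : Fin n) then (β:ℂ) else 0) * u
      + ((t:ℂ) * z i) * (starRingEnd ℂ) u
      - ((if i = (0 : Fin n) then ((t - θ : ℝ) : ℂ) else ((t : ℝ) : ℂ))
          * (Complex.normSq u : ℂ)))

lemma stf_pointwise {n : ℕ} [NeZero n] (t θ β : ℝ) (z w : Fin n → ℂ) :
    ((t / Real.pi) ^ n * Real.exp (-t * nsq w) : ℝ) •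
        (Complex.exp ((t:ℂ) * herm z w) * testf (n := n) θ β w)
      = ∏ i, psi t θ β z i (w i) := by
  have hsum : ∀ i : Fin n,
      ((if i = (0 : Fin n) then (β:ℂ) else 0) * (w i)
        + ((t:ℂ) * z i) * (starRingEnd ℂ) (w i)
        - ((if i = (0 : Fin n) then ((t - θ : ℝ) : ℂ) else ((t : ℝ) : ℂ))
            * (Complex.normSq (w i) : ℂ)))
      = ((t:ℂ) * z i * (starRingEnd ℂ) (w i) - (t:ℂ) * (Complex.normSq (w i) : ℂ))
        + (if i = (0 : Fin n) then (θ:ℂ) * (Complex.normSq (w i) : ℂ) + (β:ℂ) * (w i) else 0) := by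
    intro i
    split_ifs with hi <;> push_cast <;> ring
  unfold psi
  rw [Finset.prod_mul_distrib, Finset.prod_const, Finset.card_univ, Fintype.card_fin,
    ← Complex.exp_sum]
  rw [Finset.sum_congr rfl fun i _ => hsum i, Finset.sum_add_distrib,
    Finset.sum_ite_eq' Finset.univ (0 : Fin n)
      (fun i => (θ:ℂ) * (Complex.normSq (w i) : ℂ) + (β:ℂ) * (w i))]
  simp only [Finset.mem_univ, if_true]
  rw [sum_base]
  unfold testf
  rw [Complex.real_smul]
  rw [Complex.ofReal_mul, Complex.ofReal_pow, Complex.ofReal_exp]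
  rw [show ∀ C X Y Z : ℂ, (C * Complex.exp X) * (Complex.exp Y * Complex.exp Z)
      = C * Complex.exp (X + Y + Z) from fun C X Y Z => by
    rw [Complex.exp_add, Complex.exp_add]; ring]
  congr 1
  push_cast
  ring

lemma stf_value {n : ℕ} [NeZero n] {t θ : ℝ} (ht : 0 < t) (hθ : θ < t) (β : ℝ)
    (z : Fin n → ℂ) :
    ∫ w, Complex.exp ((t:ℂ) * herm z w) * testf (n := n) θ β w ∂(gaussMeasure n t)
      = ((t / (t - θ) : ℝ) : ℂ) * Complex.exp (((t * β / (t - θ) : ℝ) : ℂ) * z 0) := by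
  have hc1 : Continuous fun w : Fin n → ℂ => (t / Real.pi) ^ n * Real.exp (-t * nsq w) :=
    continuous_const.mul (Real.continuous_exp.comp (continuous_const.mul cont_nsq))
  have hmeas : Measurable fun w : Fin n → ℂ =>
      ((t / Real.pi) ^ n * Real.exp (-t * nsq w)).toNNReal :=
    hc1.measurable.real_toNNReal
  unfold gaussMeasure
  rw [show (fun w : Fin n → ℂ => ENNReal.ofReal ((t / Real.pi) ^ n * Real.exp (-t * nsq w)))
      = (fun w : Fin n → ℂ =>
          ((((t / Real.pi) ^ n * Real.exp (-t * nsq w)).toNNReal : NNReal) : ENNReal)) from rfl]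
  rw [integral_withDensity_eq_integral_smul hmeas]
  have hsm : ∀ w : Fin n → ℂ,
      (((t / Real.pi) ^ n * Real.exp (-t * nsq w)).toNNReal : NNReal) •
          (Complex.exp ((t:ℂ) * herm z w) * testf (n := n) θ β w)
        = ((t / Real.pi) ^ n * Real.exp (-t * nsq w) : ℝ) •
          (Complex.exp ((t:ℂ) * herm z w) * testf (n := n) θ β w) := by
    intro w
    rw [NNReal.smul_def, Real.coe_toNNReal _
      (mul_nonneg (pow_nonneg (div_nonneg ht.le Real.pi_pos.le) n) (Real.exp_pos _).le)]
  simp_rw [hsm, stf_pointwise t θ β z]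
  rw [integral_fintype_prod_volume_eq_prod (psi t θ β z)]
  have hπ : (Real.pi : ℂ) ≠ 0 := by exact_mod_cast Real.pi_ne_zero
  have htθ' : t - θ ≠ 0 := by linarith
  have htθ : ((t : ℂ) - (θ : ℂ)) ≠ 0 := by exact_mod_cast htθ'
  have ht' : (t : ℂ) ≠ 0 := by exact_mod_cast ht.ne'
  have hcoord : ∀ i : Fin n,
      (∫ u : ℂ, psi t θ β z i u)
      = if i = (0 : Fin n)
          then ((t / (t - θ) : ℝ) : ℂ) * Complex.exp (((t * β / (t - θ) : ℝ) : ℂ) * z 0)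
          else 1 := by
    intro i
    unfold psi
    by_cases hi : i = 0
    · subst hi
      simp only [eq_self_iff_true, if_true]
      rw [integral_const_mul,
        cGauss_integral (show (0:ℝ) < t - θ by linarith) (β:ℂ) ((t:ℂ) * z 0)]
      rw [← mul_assoc]
      congr 1
      · push_cast
        field_simp
      · congr 1
        push_cast
        ring
    · simp only [if_neg hi]
      rw [integral_const_mul, cGauss_integral ht 0 ((t:ℂ) * z i)]
      simp only [zero_mul, zero_div, Complex.exp_zero, mul_one]
      push_cast
      field_simp
  simp_rw [hcoord]
  rw [Finset.prod_ite_eq' Finset.univ (0 : Fin n)]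
  simp

theorem stmt3 (n : ℕ) (hn : 0 < n) (p t s : ℝ) (hp : 0 < p) (ht : 0 < t) (hs : 0 < s)
    (h : ∃ C : ℝ, 0 ≤ C ∧ SBounded n t s p C) :
    p * t ≤ 2 * s := by
  by_contra hcon
  push_neg at hcon
  haveI : NeZero n := ⟨hn.ne'⟩
  obtain ⟨C, hC0, hSB⟩ := h
  set θ : ℝ := -(t * (p * t - 2 * s)) / (2 * s) with hθdef
  have hD : 0 < p * t - 2 * s := by linarith
  have hθneg : θ < 0 := by
    rw [hθdef]
    apply div_neg_of_neg_of_pos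
    · nlinarith
    · linarith
  have hθt : θ < t := lt_trans hθneg ht
  have hσ : 0 < s - p * θ := by nlinarith
  have hα : 0 < t - θ := by linarith
  have hpθ : p * θ < s := by nlinarith
  have h1 : 2 * s * θ = -(t * (p * t - 2 * s)) := by
    rw [hθdef]
    field_simp
  have hkey : s * (t - θ)^2 < t^2 * (s - p * θ) := by
    have h2 : 4 * s * (s * (t - θ)^2 - t^2 * (s - p * θ)) = -((t * (p * t - 2 * s))^2) := by
      linear_combination (2 * s * θ + t * (p * t - 2 * s)) * h1
    nlinarith [mul_pos ht hD]
  have hK1 : (0:ℝ) < (t/(t-θ))^p := Real.rpow_pos_of_pos (div_pos ht hα) p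
  -- the main inequality for every β
  have main : ∀ β : ℝ,
      (t/(t-θ))^p * Real.exp ((p*(t*β/(t-θ)))^2/(4*s))
        ≤ C^p * (s/(s-p*θ) * Real.exp ((p*β)^2/(4*(s-p*θ)))) := by
    intro β
    obtain ⟨-, hineq⟩ := hSB (testf θ β) (testf_mem hp hs hpθ β)
    have habs : ∀ z : Fin n → ℂ,
        ENNReal.ofReal (‖∫ w, Complex.exp ((t:ℂ) * herm z w) * testf (n := n) θ β w
            ∂(gaussMeasure n t)‖ ^ p)
          = ENNReal.ofReal ((t/(t-θ))^p *
              Real.exp ((0:ℝ) * Complex.normSq (z 0) + (p*(t*β/(t-θ))) * (z 0).re)) := by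
      intro z
      rw [stf_value ht hθt β z]
      congr 1
      rw [norm_mul, Complex.norm_real, Real.norm_eq_abs, abs_of_pos (div_pos ht hα),
        Complex.norm_exp, Real.mul_rpow (div_pos ht hα).le (Real.exp_pos _).le, exp_rpow]
      congr 1
      rw [Complex.re_ofReal_mul]
      ring
    simp only [habs] at hineq
    rw [lint_master hs hs (p*(t*β/(t-θ))) ((t/(t-θ))^p) hK1.le] at hineq
    rw [lint_f hs hpθ β] at hineq
    rw [← ENNReal.ofReal_mul (Real.rpow_nonneg hC0 p)] at hineq
    rw [ENNReal.ofReal_le_ofReal_iff (by positivity)] at hineq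
    simp only [sub_zero] at hineq
    rw [div_self hs.ne', one_mul] at hineq
    exact hineq
  -- derive the clean inequality ∀ x ≥ 0
  have hAB : p^2/(4*(s-p*θ)) < (p*t/(t-θ))^2/(4*s) := by
    rw [div_pow, div_lt_div_iff₀ (by positivity) (by positivity), div_mul_eq_mul_div,
      lt_div_iff₀ (by positivity)]
    nlinarith [mul_lt_mul_of_pos_left hkey (show (0:ℝ) < 4*p^2 by positivity)]
  have key2 : ∀ x : ℝ, 0 ≤ x →
      (t/(t-θ))^p * Real.exp x ≤ C^p * (s/(s-p*θ)) := by
    intro x hx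
    have hABpos : 0 < (p*t/(t-θ))^2/(4*s) - p^2/(4*(s-p*θ)) := by linarith
    set β := Real.sqrt (x / ((p*t/(t-θ))^2/(4*s) - p^2/(4*(s-p*θ)))) with hβ
    have hβ2 : β^2 = x / ((p*t/(t-θ))^2/(4*s) - p^2/(4*(s-p*θ))) :=
      Real.sq_sqrt (div_nonneg hx hABpos.le)
    have hm := main β
    have eL : (p*(t*β/(t-θ)))^2/(4*s) = (p*t/(t-θ))^2/(4*s) * β^2 := by ring
    have eR : (p*β)^2/(4*(s-p*θ)) = p^2/(4*(s-p*θ)) * β^2 := by ring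
    rw [eL, eR] at hm
    have hsplit : (p*t/(t-θ))^2/(4*s) * β^2 = p^2/(4*(s-p*θ)) * β^2 + x := by
      have h5 : ((p*t/(t-θ))^2/(4*s) - p^2/(4*(s-p*θ))) * β^2 = x := by
        rw [hβ2, mul_comm, div_mul_cancel₀ _ hABpos.ne']
      linear_combination h5
    rw [hsplit, Real.exp_add] at hm
    have hEpos := Real.exp_pos (p^2/(4*(s-p*θ)) * β^2)
    have hm2 : ((t/(t-θ))^p * Real.exp x) * Real.exp (p^2/(4*(s-p*θ)) * β^2)
        ≤ (C^p * (s/(s-p*θ))) * Real.exp (p^2/(4*(s-p*θ)) * β^2) := by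
      calc ((t/(t-θ))^p * Real.exp x) * Real.exp (p^2/(4*(s-p*θ)) * β^2)
          = (t/(t-θ))^p * (Real.exp (p^2/(4*(s-p*θ)) * β^2) * Real.exp x) := by ring
        _ ≤ C^p * (s/(s-p*θ) * Real.exp (p^2/(4*(s-p*θ)) * β^2)) := hm
        _ = (C^p * (s/(s-p*θ))) * Real.exp (p^2/(4*(s-p*θ)) * β^2) := by ring
    exact le_of_mul_le_mul_right hm2 hEpos
  -- contradiction
  set R := C^p * (s/(s-p*θ)) with hRdef
  have hR : 0 ≤ R := mul_nonneg (Real.rpow_nonneg hC0 p) (div_pos hs hσ).le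
  have hx0 : (0:ℝ) ≤ max 0 (Real.log ((R + 1)/((t/(t-θ))^p))) := le_max_left _ _
  have h3 := key2 _ hx0
  have hlog : (R + 1)/((t/(t-θ))^p)
      ≤ Real.exp (max 0 (Real.log ((R + 1)/((t/(t-θ))^p)))) := by
    calc (R + 1)/((t/(t-θ))^p)
        = Real.exp (Real.log ((R + 1)/((t/(t-θ))^p))) := by
          rw [Real.exp_log (by positivity)]
      _ ≤ _ := Real.exp_le_exp.mpr (le_max_right _ _)
  have h4 : R + 1 ≤ R := by
    calc R + 1 = (t/(t-θ))^p * ((R + 1)/((t/(t-θ))^p)) := by field_simp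
      _ ≤ (t/(t-θ))^p * Real.exp (max 0 (Real.log ((R + 1)/((t/(t-θ))^p)))) :=
          mul_le_mul_of_nonneg_left hlog hK1.le
      _ ≤ R := h3
  linarith
end

section
/- Let t > 0, s > 0, and suppose there exists C ≥ 0 such that for every f ∈ L¹(ℂⁿ, dv_s) the function w ↦ e^{t⟨z,w⟩} f(w) is dv_t-integrable for a.e. z ∈ ℂⁿ and ∫_{ℂⁿ} |S_t f| dv_s ≤ C ∫_{ℂⁿ} |f| dv_s, where S_t f(z) = ∫_{ℂⁿ} e^{t⟨z,w⟩} f(w) dv_t(w). Then t = 2s. -/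
open MeasureTheory
open scoped NNReal ENNReal

section aux

lemma merge1 (A B c : ℂ) : (Complex.exp A * c) * Complex.exp B = c * Complex.exp (A + B) := by
  rw [Complex.exp_add]; ring

lemma merge2 (E F c : ℂ) : Complex.exp E * (c * Complex.exp F) = c * Complex.exp (E + F) := by
  rw [Complex.exp_add]; ring

lemma oneDim {β : ℝ} (hβ : 0 < β) (a b : ℂ) :
    Integrable (fun u : ℂ => Complex.exp (a * u + b * (starRingEnd ℂ) u) *
      ((β / Real.pi) * Real.exp (-β * Complex.normSq u))) volume ∧
    ∫ u : ℂ, Complex.exp (a * u + b * (starRingEnd ℂ) u) *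
      ((β / Real.pi) * Real.exp (-β * Complex.normSq u)) = Complex.exp (a * b / β) := by
  have hβ' : (0:ℝ) < ((β:ℂ)).re := by simpa using hβ
  set f1 : ℝ → ℂ := fun x => Complex.exp (-(β:ℂ) * x ^ 2 + (a + b) * x + 0) * ((β:ℝ) / Real.pi : ℝ)
    with hf1
  set f2 : ℝ → ℂ := fun y => Complex.exp (-(β:ℂ) * y ^ 2 + (Complex.I * (a - b)) * y + 0) with hf2
  have h1 : Integrable f1 volume := (integrable_cexp_quadratic hβ' _ _).mul_const _
  have h2 : Integrable f2 volume := integrable_cexp_quadratic hβ' _ _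
  have key : ∀ u : ℂ, Complex.exp (a * u + b * (starRingEnd ℂ) u) *
      ((β / Real.pi) * Real.exp (-β * Complex.normSq u)) = f1 u.re * f2 u.im := by
    intro u
    conv_lhs => rw [← Complex.re_add_im u]
    generalize u.re = x
    generalize u.im = y
    simp only [hf1, hf2, map_add, map_mul, Complex.conj_ofReal, Complex.conj_I,
      Complex.normSq_add_mul_I]
    rw [Complex.ofReal_exp, merge1, merge2]
    push_cast
    congr 1
    ring
  have hG : Integrable (fun p : ℝ × ℝ => f1 p.1 * f2 p.2) ((volume : Measure ℝ).prod volume) :=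
    h1.mul_prod h2
  have hmp := Complex.volume_preserving_equiv_real_prod
  have hint : Integrable (fun u : ℂ => Complex.exp (a * u + b * (starRingEnd ℂ) u) *
      ((β / Real.pi) * Real.exp (-β * Complex.normSq u))) volume := by
    have := (hmp.integrable_comp_emb (Complex.measurableEquivRealProd.measurableEmbedding)).2 hG
    refine this.congr (Filter.Eventually.of_forall fun u => ?_)
    simp only [Function.comp_apply, Complex.measurableEquivRealProd_apply]
    exact (key u).symm
  refine ⟨hint, ?_⟩
  have hI : ∫ u : ℂ, Complex.exp (a * u + b * (starRingEnd ℂ) u) *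
      ((β / Real.pi) * Real.exp (-β * Complex.normSq u))
      = ∫ p : ℝ × ℝ, f1 p.1 * f2 p.2 := by
    rw [← hmp.integral_comp']
    refine integral_congr_ae (Filter.Eventually.of_forall fun u => ?_)
    simp only [Function.comp_apply, Complex.measurableEquivRealProd_apply]
    exact key u
  rw [hI, Measure.volume_eq_prod, integral_prod_mul]
  have e1 : ∫ x : ℝ, Complex.exp (-(β:ℂ) * x ^ 2 + (a + b) * x + 0)
      = ((Real.pi : ℂ) / β) ^ ((1:ℂ)/2) * Complex.exp (0 - (a+b)^2 / (4 * -(β:ℂ))) := by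
    have := integral_cexp_quadratic (b := -(β:ℂ)) (by simpa using hβ) (a+b) 0
    simpa using this
  have e2 : ∫ y : ℝ, Complex.exp (-(β:ℂ) * y ^ 2 + (Complex.I * (a - b)) * y + 0)
      = ((Real.pi : ℂ) / β) ^ ((1:ℂ)/2) * Complex.exp (0 - (Complex.I*(a-b))^2 / (4 * -(β:ℂ))) := by
    have := integral_cexp_quadratic (b := -(β:ℂ)) (by simpa using hβ) (Complex.I*(a-b)) 0
    simpa using this
  rw [hf1, hf2]
  rw [integral_mul_const, e1, e2]
  have hβ0 : (β:ℂ) ≠ 0 := by exact_mod_cast hβ.ne'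
  have hπ0 : (Real.pi : ℂ) ≠ 0 := by exact_mod_cast Real.pi_ne_zero
  have hbase : ((Real.pi : ℂ) / β) ≠ 0 := div_ne_zero hπ0 hβ0
  have hsq : ((Real.pi : ℂ) / β) ^ ((1:ℂ)/2) * ((Real.pi : ℂ) / β) ^ ((1:ℂ)/2)
      = (Real.pi : ℂ) / β := by
    rw [← Complex.cpow_add _ _ hbase]
    norm_num
  calc ((Real.pi : ℂ) / β) ^ ((1:ℂ)/2) * Complex.exp (0 - (a+b)^2 / (4 * -(β:ℂ))) * (((β:ℝ) / Real.pi : ℝ) : ℂ)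
        * (((Real.pi : ℂ) / β) ^ ((1:ℂ)/2) * Complex.exp (0 - (Complex.I*(a-b))^2 / (4 * -(β:ℂ))))
      = (((Real.pi : ℂ) / β) ^ ((1:ℂ)/2) * ((Real.pi : ℂ) / β) ^ ((1:ℂ)/2) * ((β:ℂ) / Real.pi)) *
        (Complex.exp (0 - (a+b)^2 / (4 * -(β:ℂ))) * Complex.exp (0 - (Complex.I*(a-b))^2 / (4 * -(β:ℂ)))) := by
        push_cast; ring
    _ = Complex.exp (a * b / β) := by
        rw [hsq, div_mul_div_comm, mul_comm ((Real.pi:ℂ)) ((β:ℂ)),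
          div_self (mul_ne_zero hβ0 hπ0), one_mul, ← Complex.exp_add]
        congr 1
        field_simp
        ring_nf
        rw [Complex.I_sq]
        ring

lemma prodGauss (n : ℕ) {β : ℝ} (hβ : 0 < β) (c d : Fin n → ℂ) :
    Integrable (fun w : Fin n → ℂ =>
      Complex.exp (∑ i, (c i * w i + d i * (starRingEnd ℂ) (w i))) *
      (((β / Real.pi) ^ n * Real.exp (-β * nsq w) : ℝ) : ℂ)) volume ∧
    ∫ w : Fin n → ℂ, Complex.exp (∑ i, (c i * w i + d i * (starRingEnd ℂ) (w i))) *
      (((β / Real.pi) ^ n * Real.exp (-β * nsq w) : ℝ) : ℂ)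
      = Complex.exp (∑ i, c i * d i / β) := by
  set g : Fin n → ℂ → ℂ := fun i u => Complex.exp (c i * u + d i * (starRingEnd ℂ) u) *
    ((β / Real.pi) * Real.exp (-β * Complex.normSq u)) with hg
  have hkey : ∀ w : Fin n → ℂ,
      Complex.exp (∑ i, (c i * w i + d i * (starRingEnd ℂ) (w i))) *
        (((β / Real.pi) ^ n * Real.exp (-β * nsq w) : ℝ) : ℂ) = ∏ i, g i (w i) := by
    intro w
    simp only [hg]
    rw [Finset.prod_mul_distrib, Finset.prod_mul_distrib, ← Complex.exp_sum,
      Finset.prod_const, Finset.card_univ, Fintype.card_fin]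
    push_cast
    congr 1
    congr 1
    rw [← Complex.exp_sum]
    congr 1
    rw [nsq]
    push_cast
    rw [Finset.mul_sum]
  have hgint : ∀ i, Integrable (g i) volume := fun i => (oneDim hβ (c i) (d i)).1
  constructor
  · refine (Integrable.fintype_prod (f := g) hgint).congr
      (Filter.Eventually.of_forall fun w => (hkey w).symm)
  · calc ∫ w : Fin n → ℂ, Complex.exp (∑ i, (c i * w i + d i * (starRingEnd ℂ) (w i))) *
        (((β / Real.pi) ^ n * Real.exp (-β * nsq w) : ℝ) : ℂ)
        = ∫ w : Fin n → ℂ, ∏ i, g i (w i) :=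
          integral_congr_ae (Filter.Eventually.of_forall fun w => hkey w)
      _ = ∏ i, ∫ u : ℂ, g i u := MeasureTheory.integral_fintype_prod_eq_prod (ι := Fin n) g
      _ = ∏ i, Complex.exp (c i * d i / β) :=
          Finset.prod_congr rfl fun i _ => (oneDim hβ (c i) (d i)).2
      _ = Complex.exp (∑ i, c i * d i / β) := (Complex.exp_sum _ _).symm

lemma gaussDensity_meas (n : ℕ) (β : ℝ) :
    Measurable fun w : Fin n → ℂ => ((β / Real.pi) ^ n * Real.exp (-β * nsq w)).toNNReal := by
  have hnsq : Continuous (nsq (n := n)) :=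
    continuous_finset_sum _ fun i _ => Complex.continuous_normSq.comp (continuous_apply i)
  exact ((continuous_const.mul (Real.continuous_exp.comp
    (continuous_const.mul hnsq))).measurable).real_toNNReal

lemma gaussMeasure_eq (n : ℕ) (β : ℝ) : gaussMeasure n β = volume.withDensity
    (fun w => ((((β / Real.pi) ^ n * Real.exp (-β * nsq w)).toNNReal : ℝ≥0) : ℝ≥0∞)) := rfl

lemma gaussIntegral (n : ℕ) {β : ℝ} (hβ : 0 < β) (c d : Fin n → ℂ) :
    Integrable (fun w : Fin n → ℂ =>
      Complex.exp (∑ i, (c i * w i + d i * (starRingEnd ℂ) (w i)))) (gaussMeasure n β) ∧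
    ∫ w, Complex.exp (∑ i, (c i * w i + d i * (starRingEnd ℂ) (w i))) ∂(gaussMeasure n β)
      = Complex.exp (∑ i, c i * d i / β) := by
  have hρnn : ∀ w : Fin n → ℂ, 0 ≤ (β / Real.pi) ^ n * Real.exp (-β * nsq w) := fun w =>
    mul_nonneg (pow_nonneg (div_nonneg hβ.le Real.pi_pos.le) n) (Real.exp_nonneg _)
  have hsmul : ∀ w : Fin n → ℂ,
      (((((β / Real.pi) ^ n * Real.exp (-β * nsq w)).toNNReal : ℝ≥0) : ℝ)) •
        Complex.exp (∑ i, (c i * w i + d i * (starRingEnd ℂ) (w i)))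
      = Complex.exp (∑ i, (c i * w i + d i * (starRingEnd ℂ) (w i))) *
        (((β / Real.pi) ^ n * Real.exp (-β * nsq w) : ℝ) : ℂ) := by
    intro w
    rw [Real.coe_toNNReal _ (hρnn w), Complex.real_smul, mul_comm]
  have hsmul' : ∀ w : Fin n → ℂ,
      (((β / Real.pi) ^ n * Real.exp (-β * nsq w)).toNNReal : ℝ≥0) •
        Complex.exp (∑ i, (c i * w i + d i * (starRingEnd ℂ) (w i)))
      = Complex.exp (∑ i, (c i * w i + d i * (starRingEnd ℂ) (w i))) *
        (((β / Real.pi) ^ n * Real.exp (-β * nsq w) : ℝ) : ℂ) := by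
    intro w
    rw [NNReal.smul_def]
    exact hsmul w
  constructor
  · rw [gaussMeasure_eq, integrable_withDensity_iff_integrable_smul (gaussDensity_meas n β)]
    exact ((prodGauss n hβ c d).1).congr (Filter.Eventually.of_forall fun w => (hsmul w).symm)
  · rw [gaussMeasure_eq, integral_withDensity_eq_integral_smul (gaussDensity_meas n β)]
    rw [integral_congr_ae (Filter.Eventually.of_forall fun w => hsmul' w)]
    exact (prodGauss n hβ c d).2

lemma sum_ind {n : ℕ} (e0 : Fin n) (x : ℂ) (v : Fin n → ℂ) :
    ∑ i, (if i = e0 then x else 0) * v i = x * v e0 := by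
  simp [ite_mul]

end aux

theorem stmt5 (n : ℕ) (hn : 0 < n) (t s : ℝ) (ht : 0 < t) (hs : 0 < s)
    (h : ∃ C : ℝ, 0 ≤ C ∧
      ∀ f : (Fin n → ℂ) → ℂ, MemLp f 1 (gaussMeasure n s) →
        (∀ᵐ z ∂(volume : Measure (Fin n → ℂ)),
          Integrable (fun w => Complex.exp ((t : ℂ) * herm z w) * f w) (gaussMeasure n t)) ∧
        ∫⁻ z, ENNReal.ofReal
            ‖∫ w, Complex.exp ((t : ℂ) * herm z w) * f w ∂(gaussMeasure n t)‖
          ∂(gaussMeasure n s)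
          ≤ ENNReal.ofReal C *
            ∫⁻ z, ENNReal.ofReal ‖f z‖ ∂(gaussMeasure n s)) :
    t = 2 * s := by
  classical
  obtain ⟨C, hC, hbound⟩ := h
  set e0 : Fin n := ⟨0, hn⟩ with he0
  -- key lintegral computation
  have lint : ∀ a : ℝ, ∫⁻ z, ENNReal.ofReal (Real.exp (a * (z e0).re)) ∂(gaussMeasure n s)
      = ENNReal.ofReal (Real.exp (a ^ 2 / (4 * s))) := by
    intro a
    set c : Fin n → ℂ := fun i => if i = e0 then ((a / 2 : ℝ) : ℂ) else 0 with hc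
    set G : (Fin n → ℂ) → ℝ := fun z => Real.exp (a * (z e0).re) with hG
    have hHG : ∀ z : Fin n → ℂ,
        Complex.exp (∑ i, (c i * z i + c i * (starRingEnd ℂ) (z i))) = ((G z : ℝ) : ℂ) := by
      intro z
      have hsum : ∑ i, (c i * z i + c i * (starRingEnd ℂ) (z i))
          = ((a * (z e0).re : ℝ) : ℂ) := by
        rw [Finset.sum_add_distrib, hc, sum_ind, sum_ind]
        have : ((a / 2 : ℝ) : ℂ) * z e0 + ((a / 2 : ℝ) : ℂ) * (starRingEnd ℂ) (z e0)
            = ((a / 2 : ℝ) : ℂ) * (z e0 + (starRingEnd ℂ) (z e0)) := by ring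
        rw [this, Complex.add_conj]
        push_cast
        ring
      rw [hsum]
      simp only [hG]
      rw [Complex.ofReal_exp]
    have hHint := (gaussIntegral n hs c c).1
    have hHval := (gaussIntegral n hs c c).2
    have hGint : Integrable G (gaussMeasure n s) := by
      have := hHint.re
      refine this.congr (Filter.Eventually.of_forall fun z => ?_)
      show RCLike.re (Complex.exp (∑ i, (c i * z i + c i * (starRingEnd ℂ) (z i)))) = G z
      rw [hHG z]
      simp
    have hGval : ∫ z, G z ∂(gaussMeasure n s) = Real.exp (a ^ 2 / (4 * s)) := by
      have h1 : ((∫ z, G z ∂(gaussMeasure n s) : ℝ) : ℂ)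
          = ∫ z, ((G z : ℝ) : ℂ) ∂(gaussMeasure n s) := (integral_ofReal).symm
      have h2 : ∫ z, ((G z : ℝ) : ℂ) ∂(gaussMeasure n s)
          = Complex.exp (∑ i, c i * c i / s) := by
        rw [← hHval]
        exact integral_congr_ae (Filter.Eventually.of_forall fun z => (hHG z).symm)
      have h3 : ∑ i, c i * c i / (s:ℂ) = ((a ^ 2 / (4 * s) : ℝ) : ℂ) := by
        rw [← Finset.sum_div, hc]
        have : ∑ i, (if i = e0 then ((a / 2 : ℝ) : ℂ) else 0) *
            (if i = e0 then ((a / 2 : ℝ) : ℂ) else 0)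
            = ((a / 2 : ℝ) : ℂ) * ((a / 2 : ℝ) : ℂ) := sum_ind e0 _ _
        rw [this]
        have hs0 : (s:ℂ) ≠ 0 := by exact_mod_cast hs.ne'
        push_cast
        field_simp
        ring
      have : ((∫ z, G z ∂(gaussMeasure n s) : ℝ) : ℂ)
          = ((Real.exp (a ^ 2 / (4 * s)) : ℝ) : ℂ) := by
        rw [h1, h2, h3, ← Complex.ofReal_exp]
      exact_mod_cast this
    rw [← ofReal_integral_eq_lintegral_ofReal hGint
      (Filter.Eventually.of_forall fun z => Real.exp_nonneg _), hGval]
  -- now test functions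
  have main : ∀ q p : ℝ, Real.exp (q ^ 2 / (4 * s) + q * p / t)
      ≤ C * Real.exp ((q + p) ^ 2 / (4 * s)) := by
    intro q p
    set c : Fin n → ℂ := fun i => if i = e0 then ((q : ℝ) : ℂ) else 0 with hc
    set d : Fin n → ℂ := fun i => if i = e0 then ((p : ℝ) : ℂ) else 0 with hd
    set f : (Fin n → ℂ) → ℂ := fun w =>
      Complex.exp ((q:ℂ) * w e0 + (p:ℂ) * (starRingEnd ℂ) (w e0)) with hf
    have hfc : ∀ w : Fin n → ℂ,
        Complex.exp (∑ i, (c i * w i + d i * (starRingEnd ℂ) (w i))) = f w := by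
      intro w
      rw [hf]
      congr 1
      rw [Finset.sum_add_distrib, hc, hd, sum_ind, sum_ind]
    have hfint : Integrable f (gaussMeasure n s) :=
      ((gaussIntegral n hs c d).1).congr (Filter.Eventually.of_forall hfc)
    have hfmem : MemLp f 1 (gaussMeasure n s) := memLp_one_iff_integrable.mpr hfint
    obtain ⟨-, hineq⟩ := hbound f hfmem
    -- compute S_t f
    have hS : ∀ z : Fin n → ℂ, ∫ w, Complex.exp ((t : ℂ) * herm z w) * f w ∂(gaussMeasure n t)
        = Complex.exp ((q:ℂ) * z e0 + ((q * p / t : ℝ) : ℂ)) := by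
      intro z
      set d' : Fin n → ℂ := fun i => (t:ℂ) * z i + (if i = e0 then ((p:ℝ):ℂ) else 0) with hd'
      have heq : ∀ w : Fin n → ℂ, Complex.exp ((t : ℂ) * herm z w) * f w
          = Complex.exp (∑ i, (c i * w i + d' i * (starRingEnd ℂ) (w i))) := by
        intro w
        rw [hf, ← Complex.exp_add]
        congr 1
        have h1 : (t:ℂ) * herm z w = ∑ i, ((t:ℂ) * z i) * (starRingEnd ℂ) (w i) := by
          rw [herm, Finset.mul_sum]
          exact Finset.sum_congr rfl fun i _ => by ring
        simp only [hd', add_mul]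
        rw [Finset.sum_add_distrib, Finset.sum_add_distrib, hc, sum_ind, sum_ind, h1]
        ring
      have hval : ∫ w, Complex.exp ((t : ℂ) * herm z w) * f w ∂(gaussMeasure n t)
          = Complex.exp (∑ i, c i * d' i / t) := by
        rw [integral_congr_ae (Filter.Eventually.of_forall heq)]
        exact (gaussIntegral n ht c d').2
      rw [hval]
      congr 1
      rw [← Finset.sum_div, hc, sum_ind]
      have ht0 : (t:ℂ) ≠ 0 := by exact_mod_cast ht.ne'
      rw [hd']
      simp only [if_pos rfl]
      push_cast
      field_simp
    -- rewrite both lintegrals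
    have habs1 : ∀ z : Fin n → ℂ,
        ‖∫ w, Complex.exp ((t : ℂ) * herm z w) * f w ∂(gaussMeasure n t)‖
        = Real.exp (q * p / t) * Real.exp (q * (z e0).re) := by
      intro z
      rw [hS z, Complex.norm_exp, ← Real.exp_add]
      congr 1
      simp [Complex.add_re, Complex.re_ofReal_mul]
      ring
    have habs2 : ∀ z : Fin n → ℂ, ‖f z‖ = Real.exp ((q + p) * (z e0).re) := by
      intro z
      rw [hf, Complex.norm_exp]
      congr 1
      simp [Complex.add_re, Complex.re_ofReal_mul, Complex.conj_re]
      ring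
    have hL : ∫⁻ z, ENNReal.ofReal
        ‖∫ w, Complex.exp ((t : ℂ) * herm z w) * f w ∂(gaussMeasure n t)‖
        ∂(gaussMeasure n s)
        = ENNReal.ofReal (Real.exp (q * p / t)) *
          ENNReal.ofReal (Real.exp (q ^ 2 / (4 * s))) := by
      rw [← lint q, ← lintegral_const_mul' _ _ ENNReal.ofReal_ne_top]
      refine lintegral_congr fun z => ?_
      rw [habs1 z, ENNReal.ofReal_mul (Real.exp_nonneg _)]
    have hR : ∫⁻ z, ENNReal.ofReal ‖f z‖ ∂(gaussMeasure n s)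
        = ENNReal.ofReal (Real.exp ((q + p) ^ 2 / (4 * s))) := by
      rw [← lint (q + p)]
      exact lintegral_congr fun z => by rw [habs2 z]
    rw [hL, hR, ← ENNReal.ofReal_mul (Real.exp_nonneg _),
      ← ENNReal.ofReal_mul hC, ← Real.exp_add] at hineq
    have := (ENNReal.ofReal_le_ofReal_iff
      (mul_nonneg hC (Real.exp_nonneg _))).1 hineq
    rwa [add_comm (q * p / t)] at this
  -- conclude
  set δ : ℝ := 1 / t - 1 / (2 * s) with hδ
  have hδ0 : δ = 0 := by
    by_contra hne
    set p : ℝ := 1 / δ with hp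
    set q : ℝ := Real.log (C + 1) + p ^ 2 / (4 * s) with hq
    have hpδ : p * δ = 1 := by
      rw [hp]; field_simp
    have h1 : q * p / t = q * (p * δ) + q * p / (2 * s) := by
      rw [hδ]; ring
    have hAB : q ^ 2 / (4 * s) + q * p / t
        = Real.log (C + 1) + (q + p) ^ 2 / (4 * s) := by
      linear_combination h1 + q * hpδ + hq
    have hmain := main q p
    rw [hAB, Real.exp_add, Real.exp_log (by linarith : (0:ℝ) < C + 1)] at hmain
    have hexp : (0:ℝ) < Real.exp ((q + p) ^ 2 / (4 * s)) := Real.exp_pos _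
    nlinarith
  have h2 : 1 / t = 1 / (2 * s) := by
    have : 1 / t - 1 / (2 * s) = 0 := hδ0
    linarith
  rw [one_div, one_div, inv_inj] at h2
  exact h2
end

section
/- Fix t > 0, 1 ≤ p < ∞, and define the kernel 𝒦(x,y) = Σ_{n=0}^∞ t^{2n} x^n y^n / (4^n (n!)²) for x, y > 0, and the integral operator A on functions on (0,∞) by A f(x) = ∫_0^∞ t e^{−(t/2)(x+y)} 𝒦(x,y) f(y) dy. If C ≥ 0 is such that for every nonnegative f ∈ L^p(0,∞) one has ∫_0^∞ |A f(x)|^p dx ≤ C^p ∫_0^∞ |f(x)|^p dx, then C ≥ 2. -/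
open MeasureTheory Set

open Real Filter

open scoped ENNReal NNReal

/-- The kernel `𝒦(x,y) = Σ_{k=0}^∞ t^{2k} x^k y^k / (4^k (k!)²)`. -/
noncomputable def fockKernel (t x y : ℝ) : ℝ :=
  ∑' k : ℕ, t ^ (2 * k) * x ^ k * y ^ k / (4 ^ k * ((Nat.factorial k : ℝ)) ^ 2)

/-- The integral operator `A f(x) = ∫_0^∞ t e^{-(t/2)(x+y)} 𝒦(x,y) f(y) dy`. -/
noncomputable def opA (t : ℝ) (f : ℝ → ℝ) (x : ℝ) : ℝ :=
  ∫ y in Ioi (0 : ℝ), t * Real.exp (-(t / 2) * (x + y)) * fockKernel t x y * f y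

lemma int_pow_exp {u : ℝ} (hu : 0 < u) (k : ℕ) :
    ∫ y in Ioi (0:ℝ), y ^ k * Real.exp (-(u * y)) = (k.factorial : ℝ) / u ^ (k+1) := by
  have h := Real.integral_rpow_mul_exp_neg_mul_Ioi (a := (k:ℝ)+1) (r := u)
    (by positivity) hu
  simp only [add_sub_cancel_right, Real.rpow_natCast] at h
  rw [h, Real.Gamma_nat_eq_factorial, one_div, Real.inv_rpow hu.le,
    ← Real.rpow_natCast u (k+1)]
  push_cast
  ring

lemma integrableOn_pow_exp {u : ℝ} (hu : 0 < u) (k : ℕ) :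
    IntegrableOn (fun y : ℝ => y ^ k * Real.exp (-(u * y))) (Ioi (0:ℝ)) := by
  have h := integrableOn_rpow_mul_exp_neg_mul_rpow (p := 1) (s := (k:ℝ)) (b := u)
    (lt_of_lt_of_le neg_one_lt_zero (Nat.cast_nonneg k)) one_pos hu
  refine h.congr_fun (fun y hy => ?_) measurableSet_Ioi
  simp [Real.rpow_natCast, Real.rpow_one]

lemma int_exp {a : ℝ} (ha : 0 < a) :
    ∫ y in Ioi (0:ℝ), Real.exp (-(a * y)) = 1 / a := by
  have := int_pow_exp ha 0
  simpa using this

lemma lint_exp {a : ℝ} (ha : 0 < a) :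
    ∫⁻ y in Ioi (0:ℝ), ENNReal.ofReal (Real.exp (-(a * y))) = ENNReal.ofReal (1 / a) := by
  rw [← ofReal_integral_eq_lintegral_ofReal]
  · rw [int_exp ha]
  · have := exp_neg_integrableOn_Ioi 0 ha
    refine this.congr_fun (fun y _ => by ring_nf) measurableSet_Ioi
  · exact Filter.Eventually.of_forall fun y => (Real.exp_pos _).le

lemma exp_tsum (x : ℝ) : Real.exp x = ∑' n : ℕ, x ^ n / n.factorial := by
  rw [Real.exp_eq_exp_ℝ, NormedSpace.exp_eq_tsum_div]

lemma opA_exp {t s x : ℝ} (ht : 0 < t) (hs : 0 < s) (hx : 0 < x) :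
    opA t (fun y => Real.exp (-(s * y))) x
      = (t / (s + t / 2)) * Real.exp (-(t * s / (2 * (s + t / 2)) * x)) := by
  set u : ℝ := s + t / 2 with hu_def
  have hu : 0 < u := by rw [hu_def]; positivity
  set E : ℝ := Real.exp (-(t / 2 * x)) with hE_def
  have hE : 0 < E := Real.exp_pos _
  set c : ℕ → ℝ := fun k => t * E * (t ^ (2 * k) * x ^ k / (4 ^ k * (k.factorial : ℝ) ^ 2))
    with hc
  set F : ℕ → ℝ → ℝ := fun k y => c k * (y ^ k * Real.exp (-(u * y))) with hF
  have hck : ∀ k, 0 ≤ c k := by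
    intro k
    have := hE.le
    rw [hc]
    positivity
  have hpt : ∀ y : ℝ,
      t * Real.exp (-(t / 2) * (x + y)) * fockKernel t x y * Real.exp (-(s * y))
        = ∑' k, F k y := by
    intro y
    rw [fockKernel, ← tsum_mul_left, ← tsum_mul_right]
    refine tsum_congr fun k => ?_
    have hexp : Real.exp (-(t / 2) * (x + y)) * Real.exp (-(s * y))
        = E * Real.exp (-(u * y)) := by
      rw [hE_def, ← Real.exp_add, ← Real.exp_add]
      congr 1
      rw [hu_def]; ring
    simp only [hF, hc]
    linear_combination
      (t * (t ^ (2 * k) * x ^ k * y ^ k / (4 ^ k * (k.factorial : ℝ) ^ 2))) * hexp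
  have h1 : opA t (fun y => Real.exp (-(s * y))) x = ∫ y in Ioi (0:ℝ), ∑' k, F k y := by
    rw [opA]
    exact integral_congr_ae (Filter.Eventually.of_forall fun y => hpt y)
  have hFk : ∀ k, Integrable (F k) (volume.restrict (Ioi 0)) := fun k =>
    ((integrableOn_pow_exp hu k).const_mul (c k))
  have hFint : ∀ k, (∫ y in Ioi (0:ℝ), F k y) = c k * ((k.factorial : ℝ) / u ^ (k+1)) := by
    intro k
    rw [hF]
    simp only
    rw [integral_const_mul, int_pow_exp hu]
  have hnorm : ∀ k, (∫ y in Ioi (0:ℝ), ‖F k y‖) = c k * ((k.factorial : ℝ) / u ^ (k+1)) := by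
    intro k
    rw [← hFint k]
    refine setIntegral_congr_fun measurableSet_Ioi (fun y hy => ?_)
    have hy' : (0:ℝ) < y := hy
    rw [hF]
    simp only
    rw [Real.norm_eq_abs, abs_of_nonneg (mul_nonneg (hck k)
      (mul_nonneg (pow_nonneg hy'.le k) (Real.exp_pos _).le))]
  have hcval : ∀ k, c k * ((k.factorial : ℝ) / u ^ (k+1))
      = (t * E / u) * ((t ^ 2 * x / (4 * u)) ^ k / k.factorial) := by
    intro k
    have hkf : ((k.factorial : ℝ)) ≠ 0 := Nat.cast_ne_zero.mpr k.factorial_ne_zero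
    rw [hc]
    simp only
    rw [pow_mul]
    field_simp [hu.ne', mul_pow]
    rw [div_pow, mul_pow, mul_pow, pow_succ]
    field_simp
    ring
  have hsum : Summable (fun k => c k * ((k.factorial : ℝ) / u ^ (k+1))) := by
    refine Summable.congr ?_ (fun k => (hcval k).symm)
    exact (Real.summable_pow_div_factorial _).mul_left _
  have h2 : (∑' k, c k * ((k.factorial : ℝ) / u ^ (k+1)))
      = (t / u) * Real.exp (-(t * s / (2 * u) * x)) := by
    rw [tsum_congr hcval, tsum_mul_left, ← exp_tsum]
    have h0 : s + t / 2 ≠ 0 := by positivity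
    have key : E * Real.exp (t ^ 2 * x / (4 * u)) = Real.exp (-(t * s / (2 * u) * x)) := by
      rw [hE_def, ← Real.exp_add]
      congr 1
      rw [hu_def]
      field_simp
      ring
    linear_combination (t / u) * key
  rw [h1, ← integral_tsum_of_summable_integral_norm hFk
    (hsum.congr fun k => (hnorm k).symm), tsum_congr hFint, h2]

lemma lint_abs_exp_pow {a p : ℝ} (ha : 0 < a) (hp : 0 < p) :
    ∫⁻ y in Ioi (0:ℝ), ENNReal.ofReal (|Real.exp (-(a * y))| ^ p)
      = ENNReal.ofReal (1 / (a * p)) := by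
  have h : ∀ y : ℝ, |Real.exp (-(a * y))| ^ p = Real.exp (-(a * p * y)) := by
    intro y
    rw [abs_of_pos (Real.exp_pos _), ← Real.exp_mul]
    congr 1
    ring
  simp_rw [h]
  exact lint_exp (by positivity)

lemma memLp_exp {s p : ℝ} (hs : 0 < s) (hp : 1 ≤ p) :
    MemLp (fun y : ℝ => Real.exp (-(s * y))) (ENNReal.ofReal p)
      (volume.restrict (Ioi (0 : ℝ))) := by
  have hp0 : (0:ℝ) < p := lt_of_lt_of_le one_pos hp
  refine ⟨(Real.continuous_exp.comp (by continuity)).aestronglyMeasurable, ?_⟩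
  rw [eLpNorm_eq_lintegral_rpow_enorm_toReal (by simp [ENNReal.ofReal_eq_zero]; linarith)
    ENNReal.ofReal_ne_top]
  refine ENNReal.rpow_lt_top_of_nonneg (by positivity) ?_
  have : ∀ y : ℝ, (‖Real.exp (-(s * y))‖ₑ) ^ (ENNReal.ofReal p).toReal
      = ENNReal.ofReal (|Real.exp (-(s * y))| ^ p) := by
    intro y
    rw [Real.enorm_eq_ofReal_abs, ← ENNReal.ofReal_rpow_of_pos (abs_pos.mpr (Real.exp_ne_zero _)),
      ENNReal.toReal_ofReal hp0.le]
  simp_rw [this]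
  rw [lint_abs_exp_pow hs hp0]
  exact ENNReal.ofReal_ne_top

theorem stmt12 (t p : ℝ) (ht : 0 < t) (hp : 1 ≤ p) (C : ℝ) (hC : 0 ≤ C)
    (hbd : ∀ f : ℝ → ℝ, (∀ x, 0 ≤ f x) →
      MemLp f (ENNReal.ofReal p) (volume.restrict (Ioi (0 : ℝ))) →
      ∫⁻ x in Ioi (0 : ℝ), ENNReal.ofReal (|opA t f x| ^ p)
        ≤ ENNReal.ofReal (C ^ p) * ∫⁻ x in Ioi (0 : ℝ), ENNReal.ofReal (|f x| ^ p)) :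
    2 ≤ C := by
  have hp0 : (0:ℝ) < p := lt_of_lt_of_le one_pos hp
  -- Step 1: for every s > 0, a bound on C ^ p
  have key : ∀ s : ℝ, 0 < s →
      (t / (s + t / 2)) ^ p * (2 * (s + t / 2) / t) ≤ C ^ p := by
    intro s hs
    set u : ℝ := s + t / 2 with hu_def
    have hu : 0 < u := by rw [hu_def]; positivity
    set σ : ℝ := t * s / (2 * u) with hσ_def
    have hσ : 0 < σ := by rw [hσ_def]; positivity
    have htu : 0 < t / u := by positivity
    have hbd' := hbd (fun y => Real.exp (-(s * y)))
      (fun y => (Real.exp_pos _).le) (memLp_exp hs hp)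
    -- compute LHS
    have hLHS : ∫⁻ x in Ioi (0:ℝ),
        ENNReal.ofReal (|opA t (fun y => Real.exp (-(s * y))) x| ^ p)
        = ENNReal.ofReal ((t / u) ^ p) * ENNReal.ofReal (1 / (σ * p)) := by
      rw [setLIntegral_congr_fun measurableSet_Ioi
        (fun x (hx : 0 < x) => ?_)
        (g := fun x => ENNReal.ofReal ((t / u) ^ p) * ENNReal.ofReal (|Real.exp (-(σ * x))| ^ p))]
      · rw [lintegral_const_mul' _ _ ENNReal.ofReal_ne_top, lint_abs_exp_pow hσ hp0]
      · rw [opA_exp ht hs hx, abs_mul, Real.mul_rpow (abs_nonneg _) (abs_nonneg _),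
          abs_of_pos htu, ENNReal.ofReal_mul (by positivity)]
    rw [hLHS, lint_abs_exp_pow hs hp0, ← ENNReal.ofReal_mul (by positivity),
      ← ENNReal.ofReal_mul (by positivity)] at hbd'
    have hineq : (t / u) ^ p * (1 / (σ * p)) ≤ C ^ p * (1 / (s * p)) :=
      (ENNReal.ofReal_le_ofReal_iff (by positivity)).mp hbd'
    rw [mul_one_div, mul_one_div, div_le_div_iff₀ (by positivity) (by positivity)] at hineq
    -- hineq : (t/u)^p * (s*p) ≤ C^p * (σ*p)
    calc (t / u) ^ p * (2 * u / t)
        = ((t / u) ^ p * (s * p)) * (2 * u / (t * s * p)) := by field_simp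
      _ ≤ (C ^ p * (σ * p)) * (2 * u / (t * s * p)) := by
          apply mul_le_mul_of_nonneg_right hineq (by positivity)
      _ = C ^ p := by rw [hσ_def]; field_simp
  -- Step 2: take the limit s → 0⁺
  have htend : Tendsto (fun s : ℝ => (t / (s + t / 2)) ^ p * (2 * (s + t / 2) / t))
      (nhdsWithin 0 (Ioi 0)) (nhds ((2:ℝ) ^ p)) := by
    have hden : ((0:ℝ) + t / 2) ≠ 0 := by positivity
    have h1 : Tendsto (fun s : ℝ => t / (s + t / 2)) (nhds 0) (nhds (t / (0 + t / 2))) :=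
      tendsto_const_nhds.div ((continuous_id.add continuous_const).tendsto 0) hden
    have hv1 : t / ((0:ℝ) + t / 2) = 2 := by
      rw [zero_add]
      field_simp
    rw [hv1] at h1
    have h2 : Tendsto (fun s : ℝ => (t / (s + t / 2)) ^ p) (nhdsWithin 0 (Ioi 0))
        (nhds ((2:ℝ) ^ p)) :=
      (h1.mono_left nhdsWithin_le_nhds).rpow_const (Or.inl two_ne_zero)
    have h3 : Tendsto (fun s : ℝ => 2 * (s + t / 2) / t) (nhds 0)
        (nhds (2 * (0 + t / 2) / t)) :=
      ((continuous_const.mul (continuous_id.add continuous_const)).div_const t).tendsto 0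
    have hv3 : 2 * ((0:ℝ) + t / 2) / t = 1 := by
      rw [zero_add]
      field_simp
    rw [hv3] at h3
    have := h2.mul (h3.mono_left nhdsWithin_le_nhds)
    simpa using this
  have h2p : (2:ℝ) ^ p ≤ C ^ p := by
    refine le_of_tendsto htend ?_
    filter_upwards [self_mem_nhdsWithin] with s hs
    exact key s hs
  by_contra hlt
  push_neg at hlt
  exact absurd h2p (not_le.mpr (Real.rpow_lt_rpow hC hlt hp0))
end
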